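/- The eigenvalues of the quadratic form Q₊(a) = -2a₁² + (10/3)a₂² + 4a₃² + (10/3)a₄² - 2a₅² are (-2, -2, 10/3, 10/3, 4), while the eigenvalues of the quadratic form Q₋(a) = (4/3)a₂² + 4a₃² + (4/3)a₄² + (4/√3)a₁a₄ + (4/√3)a₂a₅ are (-2/3, -2/3, 2, 2, 4). In particular the two quadratic forms are not congruent (not related by an orthogonal change of coordinates). -/

import Mathlib

open Matrix Polynomial

/-- The symmetric matrix of the Ricci quadratic form `Q₊` of `M₊⁵`. -/
noncomputable def Mplus : Matrix (Fin 5) (Fin 5) ℝ :=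
  Matrix.diagonal ![-2, 10 / 3, 4, 10 / 3, -2]

/-- The symmetric matrix of the Ricci quadratic form `Q₋` of `M₋⁵`. -/
noncomputable def Mminus : Matrix (Fin 5) (Fin 5) ℝ :=
  !![0, 0, 0, 2 / Real.sqrt 3, 0;
     0, 4 / 3, 0, 0, 2 / Real.sqrt 3;
     0, 0, 4, 0, 0;
     2 / Real.sqrt 3, 0, 0, 4 / 3, 0;
     0, 2 / Real.sqrt 3, 0, 0, 0]

lemma charpoly_Mplus : Mplus.charpoly = (X + C 2) ^ 2 * (X - C (10 / 3)) ^ 2 * (X - C 4) := by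
  rw [Mplus, charpoly_of_upperTriangular _ (blockTriangular_diagonal _)]
  simp [Fin.prod_univ_succ]
  ring

set_option maxHeartbeats 2000000 in
lemma charpoly_Mminus :
    Mminus.charpoly = (X + C (2 / 3)) ^ 2 * (X - C 2) ^ 2 * (X - C 4) := by
  have hcm : charmatrix Mminus =
      !![X, 0, 0, -C (2 / Real.sqrt 3), 0;
         0, X - C (4/3), 0, 0, -C (2 / Real.sqrt 3);
         0, 0, X - C 4, 0, 0;
         -C (2 / Real.sqrt 3), 0, 0, X - C (4/3), 0;
         0, -C (2 / Real.sqrt 3), 0, 0, X] := by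
    ext i j
    fin_cases i <;> fin_cases j <;>
      simp [Mminus, charmatrix_apply, Matrix.diagonal_apply, vecHead, vecTail]
  rw [Matrix.charpoly, hcm]
  simp [Matrix.det_succ_row_zero, Fin.sum_univ_succ, Fin.succAbove, Fin.castSucc,
    Fin.castAdd, Fin.castLE, Matrix.cons_val_two, Matrix.cons_val_three, vecHead, vecTail]
  apply Polynomial.funext
  intro x
  have hu : (2 / Real.sqrt 3) ^ 2 = 4 / 3 := by
    rw [div_pow, Real.sq_sqrt] <;> norm_num
  simp only [eval_add, eval_sub, eval_mul, eval_neg, eval_pow, eval_X, eval_C, eval_ofNat,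
    eval_one]
  linear_combination (-(x - 4) * (2*(x^2 - (4/3)*x) - (2 / Real.sqrt 3)^2 - 4/3)) * hu

set_option maxRecDepth 4000 in
theorem stmt13 :
    Mplus.charpoly = (X + C 2) ^ 2 * (X - C (10 / 3)) ^ 2 * (X - C 4) ∧
      Mminus.charpoly = (X + C (2 / 3)) ^ 2 * (X - C 2) ^ 2 * (X - C 4) ∧
      ∀ O : Matrix (Fin 5) (Fin 5) ℝ, O * Oᵀ = 1 → Oᵀ * Mplus * O ≠ Mminus := by
  refine ⟨charpoly_Mplus, charpoly_Mminus, ?_⟩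
  intro O hO h
  have hdm : Mminus.det = Mplus.det := by
    rw [← h, det_mul, det_mul, det_transpose]
    have hd : O.det * O.det = 1 := by
      have := congrArg Matrix.det hO
      rwa [det_mul, det_transpose, det_one] at this
    linear_combination Mplus.det * hd
  have h1 : Mplus.det = 1600 / 9 := by
    simp [Mplus, det_diagonal, Fin.prod_univ_succ]
    norm_num
  have h2' : Mminus.det = 64 / 9 := by
    rw [det_eq_sign_charpoly_coeff, charpoly_Mminus, coeff_zero_eq_eval_zero]
    simp
    norm_num
  rw [h1, h2'] at hdm
  norm_num at hdm
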